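/- Let p be an odd prime and A = {1,…,p−1}. Then s_{A,≤3}(C_p) = 2, s_{A,≤3}(C_p^2) = 3, s_{A,≤3}(C_p^3) = 2 + p, and s_{A,≤3}(C_p^4) = 2 + p^2. -/

import Mathlib

open scoped BigOperators

/-- `l` encodes a `W`-weighted zero-subsum of the sequence (multiset) `S`:
a nonempty list of (weight, group element) pairs with weights in `W`, whose
group elements form a sub-multiset of `S` and whose weighted sum is zero. -/
def IsWZeroSubsum {G : Type*} [AddCommGroup G] (W : Set ℤ) (S : Multiset G)
    (l : List (ℤ × G)) : Prop :=
  l ≠ [] ∧ (∀ p ∈ l, p.1 ∈ W) ∧ (↑(l.map Prod.snd) : Multiset G) ≤ S ∧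
    (l.map fun p => p.1 • p.2).sum = 0

/-- `S` has a `W`-weighted zero-subsum whose length lies in `L`. -/
def HasWZeroSubsumLen {G : Type*} [AddCommGroup G] (W : Set ℤ) (S : Multiset G)
    (L : Set ℕ) : Prop :=
  ∃ l : List (ℤ × G), IsWZeroSubsum W S l ∧ l.length ∈ L

/-- `S` has `m` pairwise disjoint `W`-weighted zero-subsums. -/
def HasDisjointWZeroSubsums {G : Type*} [AddCommGroup G] (W : Set ℤ) (S : Multiset G)
    (m : ℕ) : Prop :=
  ∃ ls : List (List (ℤ × G)), ls.length = m ∧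
    (∀ l ∈ ls, l ≠ [] ∧ (∀ p ∈ l, p.1 ∈ W) ∧ (l.map fun p => p.1 • p.2).sum = 0) ∧
    (↑(ls.flatten.map Prod.snd) : Multiset G) ≤ S

/-- The `m`-wise `W`-weighted Davenport constant `D_{W,m}(G)`. -/
noncomputable def DW (W : Set ℤ) (G : Type*) [AddCommGroup G] (m : ℕ) : ℕ :=
  sInf {n : ℕ | ∀ S : Multiset G, n ≤ Multiset.card S → HasDisjointWZeroSubsums W S m}

/-- The `L`-constrained `W`-weighted Davenport constant `s_{W,L}(G)`, valued in `ℕ∞`. -/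
noncomputable def sWL (W : Set ℤ) (G : Type*) [AddCommGroup G] (L : Set ℕ) : ℕ∞ :=
  sInf {N : ℕ∞ | ∃ n : ℕ, N = (n : ℕ∞) ∧
    ∀ S : Multiset G, n ≤ Multiset.card S → HasWZeroSubsumLen W S L}

/-- The `d`-constrained `W`-weighted Davenport constant `s_{W,≤d}(G)`. -/
noncomputable def sWle (W : Set ℤ) (G : Type*) [AddCommGroup G] (d : ℕ) : ℕ∞ :=
  sWL W G {t | 1 ≤ t ∧ t ≤ d}

/-- `e_W(G)`: the smallest `t ≥ 1` such that some `t` weights from `W` sum to a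
multiple of `exp(G)`. -/
noncomputable def eW (W : Set ℤ) (G : Type*) [AddCommGroup G] : ℕ :=
  sInf {t : ℕ | 1 ≤ t ∧ ∃ w : Fin t → ℤ, (∀ i, w i ∈ W) ∧
    ((AddMonoid.exponent G : ℤ) ∣ ∑ i, w i)}

/-- `W` is multiplicatively closed modulo `n`. -/
def MulClosedMod (W : Set ℤ) (n : ℕ) : Prop :=
  ∀ w ∈ W, ∀ w' ∈ W, ∃ u ∈ W, (n : ℤ) ∣ w * w' - u


open Module Submodule

section Bridge
variable {p : ℕ} [hpf : Fact p.Prime] {M : Type*} [AddCommGroup M] [Module (ZMod p) M]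

lemma has_of_list (S : Multiset M)
    (l : List (ZMod p × M)) (hne : l ≠ []) (hlen : l.length ≤ 3)
    (hw : ∀ q ∈ l, q.1 ≠ 0) (hle : ↑(l.map Prod.snd) ≤ S)
    (hsum : (l.map fun q => q.1 • q.2).sum = 0) :
    HasWZeroSubsumLen (Set.Icc 1 ((p : ℤ) - 1)) S {t | 1 ≤ t ∧ t ≤ 3} := by
  refine ⟨l.map fun q => ((q.1.val : ℤ), q.2), ⟨?_, ?_, ?_, ?_⟩, ?_⟩
  · simpa using hne
  · rintro q hq
    simp only [List.mem_map] at hq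
    obtain ⟨r, hr, rfl⟩ := hq
    have h1 : r.1.val ≠ 0 := by
      simpa [ZMod.val_eq_zero] using hw r hr
    have h2 : r.1.val < p := ZMod.val_lt r.1
    simp only [Set.mem_Icc]
    constructor
    · exact_mod_cast Nat.one_le_iff_ne_zero.mpr h1
    · show (r.1.val : ℤ) ≤ (p : ℤ) - 1
      omega
  · simpa [List.map_map, Function.comp_def] using hle
  · rw [List.map_map]
    have : ((fun (q : ℤ × M) => q.1 • q.2) ∘ fun q : ZMod p × M => ((q.1.val : ℤ), q.2))
        = fun q : ZMod p × M => q.1 • q.2 := by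
      funext q
      show ((q.1.val : ℤ)) • q.2 = q.1 • q.2
      rw [← Int.cast_smul_eq_zsmul (ZMod p)]
      norm_cast
      rw [← Nat.cast_smul_eq_nsmul (ZMod p), ZMod.natCast_zmod_val]
    rw [this]
    exact hsum
  · simp only [List.length_map, Set.mem_setOf_eq]
    exact ⟨List.length_pos_iff.mpr hne, hlen⟩

lemma list_of_has (S : Multiset M)
    (h : HasWZeroSubsumLen (Set.Icc 1 ((p : ℤ) - 1)) S {t | 1 ≤ t ∧ t ≤ 3}) :
    ∃ l : List (ZMod p × M), l ≠ [] ∧ l.length ≤ 3 ∧ (∀ q ∈ l, q.1 ≠ 0) ∧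
      (↑(l.map Prod.snd) : Multiset M) ≤ S ∧ (l.map fun q => q.1 • q.2).sum = 0 := by
  obtain ⟨l, ⟨hne, hw, hle, hsum⟩, _, hlen⟩ := h
  refine ⟨l.map fun q => (((q.1 : ℤ) : ZMod p), q.2), by simpa using hne,
    by simpa using hlen, ?_, by simpa [List.map_map, Function.comp_def] using hle, ?_⟩
  · rintro q hq
    simp only [List.mem_map] at hq
    obtain ⟨r, hr, rfl⟩ := hq
    obtain ⟨h1, h2⟩ := hw r hr
    simp only
    intro h0
    rw [ZMod.intCast_zmod_eq_zero_iff_dvd] at h0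
    have := Int.le_of_dvd (by omega) h0
    have hp2 : 2 ≤ p := hpf.out.two_le
    have : (p : ℤ) ≤ (p : ℤ) - 1 := le_trans this h2
    omega
  · rw [List.map_map]
    have : ((fun (q : ZMod p × M) => q.1 • q.2) ∘ fun q : ℤ × M => (((q.1 : ℤ) : ZMod p), q.2))
        = fun q : ℤ × M => q.1 • q.2 := by
      funext q
      exact Int.cast_smul_eq_zsmul (ZMod p) q.1 q.2
    rw [this]
    exact hsum

end Bridge

def IsCap (p : ℕ) {M : Type*} [AddCommGroup M] [Module (ZMod p) M] (C : Finset M) : Prop :=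
  (∀ v ∈ C, v ≠ 0) ∧
  (∀ u ∈ C, ∀ v ∈ C, u ≠ v → ∀ a b : ZMod p, a • u + b • v = 0 → a = 0 ∧ b = 0) ∧
  (∀ u ∈ C, ∀ v ∈ C, ∀ x ∈ C, u ≠ v → u ≠ x → v ≠ x →
    ∀ a b c : ZMod p, a • u + b • v + c • x = 0 → a = 0 ∧ b = 0 ∧ c = 0)

section Bridge2
variable {p : ℕ} [hpf : Fact p.Prime] {M : Type*} [AddCommGroup M] [Module (ZMod p) M]

lemma not_has_of_cap (C : Finset M) (hcap : IsCap p C) :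
    ¬ HasWZeroSubsumLen (Set.Icc 1 ((p : ℤ) - 1)) C.val {t | 1 ≤ t ∧ t ≤ 3} := by
  intro h
  obtain ⟨l, hne, hlen, hw, hle, hsum⟩ := list_of_has _ h
  have hnd : (l.map Prod.snd).Nodup := by
    have := Multiset.nodup_of_le hle C.nodup
    simpa using this
  have hmem : ∀ q ∈ l, q.2 ∈ C := by
    intro q hq
    have : q.2 ∈ (↑(l.map Prod.snd) : Multiset M) := by
      simp only [Multiset.mem_coe, List.mem_map]
      exact ⟨q, hq, rfl⟩
    simpa using Multiset.mem_of_le hle this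
  match l, hne with
  | [q], _ =>
    have h2 : q.1 • q.2 = 0 := by simpa using hsum
    have := hcap.1 q.2 (hmem q (by simp))
    have hq1 : q.1 ≠ 0 := hw q (by simp)
    rcases smul_eq_zero.mp h2 with h | h
    · exact hq1 h
    · exact this h
  | [q, r], _ =>
    have h2 : q.1 • q.2 + r.1 • r.2 = 0 := by simpa using hsum
    have hqr : q.2 ≠ r.2 := by simpa using hnd
    have := (hcap.2.1 q.2 (hmem q (by simp)) r.2 (hmem r (by simp)) hqr q.1 r.1 h2).1
    exact hw q (by simp) this
  | [q, r, s], _ =>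
    have h2 : q.1 • q.2 + r.1 • r.2 + s.1 • s.2 = 0 := by
      simpa [add_assoc] using hsum
    have hnd' : q.2 ≠ r.2 ∧ q.2 ≠ s.2 ∧ r.2 ≠ s.2 := by
      simp only [List.map_cons, List.map_nil, List.nodup_cons, List.mem_cons] at hnd
      tauto
    have := (hcap.2.2 q.2 (hmem q (by simp)) r.2 (hmem r (by simp)) s.2 (hmem s (by simp))
      hnd'.1 hnd'.2.1 hnd'.2.2 q.1 r.1 s.1 h2).1
    exact hw q (by simp) this
  | q :: r :: s :: t :: rest, _ => simp at hlen; omega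

lemma pair_le_of_mem {u v : M} {S : Multiset M} (hnd : S.Nodup) (hu : u ∈ S) (hv : v ∈ S)
    (huv : u ≠ v) : (↑[u, v] : Multiset M) ≤ S := by
  rw [Multiset.le_iff_subset (by simp [huv])]
  intro x hx
  simp only [Multiset.mem_coe, List.mem_cons, List.not_mem_nil, or_false] at hx
  rcases hx with rfl | rfl
  · exact hu
  · exact hv

lemma triple_le_of_mem {u v x : M} {S : Multiset M} (hnd : S.Nodup) (hu : u ∈ S) (hv : v ∈ S)
    (hx : x ∈ S) (huv : u ≠ v) (hux : u ≠ x) (hvx : v ≠ x) :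
    (↑[u, v, x] : Multiset M) ≤ S := by
  rw [Multiset.le_iff_subset (by simp [huv, hux, hvx])]
  intro y hy
  simp only [Multiset.mem_coe, List.mem_cons, List.not_mem_nil, or_false] at hy
  rcases hy with rfl | rfl | rfl
  · exact hu
  · exact hv
  · exact hx

lemma has_of_capBound (m : ℕ) (hbound : ∀ C : Finset M, IsCap p C → C.card ≤ m)
    (S : Multiset M) (hS : m + 1 ≤ Multiset.card S) :
    HasWZeroSubsumLen (Set.Icc 1 ((p : ℤ) - 1)) S {t | 1 ≤ t ∧ t ≤ 3} := by
  classical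
  by_contra h
  -- S has no duplicates
  have hone : (1 : ZMod p) ≠ 0 := one_ne_zero
  have hnd : S.Nodup := by
    by_contra hnd
    rw [Multiset.nodup_iff_count_le_one] at hnd
    push_neg at hnd
    obtain ⟨a, ha⟩ := hnd
    have h2 : 2 ≤ S.count a := ha
    have hrep : (↑[a, a] : Multiset M) ≤ S := by
      have := (Multiset.le_count_iff_replicate_le).mp h2
      exact (by simpa [← Multiset.coe_replicate, List.replicate] using this : a ::ₘ {a} ≤ S)
    refine h (has_of_list S [(1, a), (-1, a)] (by simp) (by simp) ?_ (by simpa using hrep) ?_)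
    · rintro q hq
      simp only [List.mem_cons, List.not_mem_nil, or_false] at hq
      rcases hq with rfl | rfl
      · exact hone
      · exact neg_ne_zero.mpr hone
    · simp
  -- all elements nonzero
  have hne : ∀ v ∈ S, v ≠ 0 := by
    rintro v hv rfl
    refine h (has_of_list S [(1, (0:M))] (by simp) (by simp)
      (by rintro q hq; simp only [List.mem_cons, List.not_mem_nil, or_false] at hq; subst hq
          exact hone)
      (by simpa using Multiset.singleton_le.mpr hv) (by simp))
  -- pair condition
  have htwo : ∀ u ∈ S, ∀ v ∈ S, u ≠ v → ∀ a b : ZMod p, a • u + b • v = 0 → a = 0 ∧ b = 0 := by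
    intro u hu v hv huv a b hab
    by_cases ha : a = 0
    · subst ha
      by_cases hb : b = 0
      · exact ⟨rfl, hb⟩
      · exfalso
        rw [zero_smul, zero_add] at hab
        rcases smul_eq_zero.mp hab with h' | h'
        · exact hb h'
        · exact hne v hv h'
    · by_cases hb : b = 0
      · exfalso
        subst hb
        rw [zero_smul, add_zero] at hab
        rcases smul_eq_zero.mp hab with h' | h'
        · exact ha h'
        · exact hne u hu h'
      · exfalso
        exact h (has_of_list S [(a, u), (b, v)] (by simp) (by simp)
          (by rintro q hq
              simp only [List.mem_cons, List.not_mem_nil, or_false] at hq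
              rcases hq with rfl | rfl <;> assumption)
          (by simpa using pair_le_of_mem hnd hu hv huv)
          (by simpa using hab))
  -- build the cap
  set C := S.toFinset with hC
  have hcard : C.card = Multiset.card S := (Multiset.toFinset_card_eq_card_iff_nodup.mpr hnd)
  have hmemC : ∀ x, x ∈ C ↔ x ∈ S := by intro x; simp [hC]
  have hcap : IsCap p C := by
    refine ⟨fun v hv => hne v ((hmemC v).mp hv),
      fun u hu v hv huv a b hab => htwo u ((hmemC u).mp hu) v ((hmemC v).mp hv) huv a b hab,
      ?_⟩
    intro u hu v hv x hx huv hux hvx a b c habc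
    rw [hmemC] at hu hv hx
    by_cases ha : a = 0
    · subst ha
      rw [zero_smul, zero_add] at habc
      have := htwo v hv x hx hvx b c habc
      exact ⟨rfl, this.1, this.2⟩
    · by_cases hb : b = 0
      · subst hb
        rw [zero_smul, add_zero] at habc
        have := htwo u hu x hx hux a c habc
        exact absurd this.1 ha
      · by_cases hc : c = 0
        · subst hc
          rw [zero_smul, add_zero] at habc
          have := htwo u hu v hv huv a b habc
          exact ⟨this.1, this.2, rfl⟩
        · exfalso
          exact h (has_of_list S [(a, u), (b, v), (c, x)] (by simp) (by simp)
            (by rintro q hq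
                simp only [List.mem_cons, List.not_mem_nil, or_false] at hq
                rcases hq with rfl | rfl | rfl <;> assumption)
            (by simpa using triple_le_of_mem hnd hu hv hx huv hux hvx)
            (by simpa [add_assoc] using habc))
  have := hbound C hcap
  omega

end Bridge2

section Nu
variable {p : ℕ} [hpf : Fact p.Prime]

/-- Canonical representatives of projective points of `F_p^2`. -/
def nu (p : ℕ) [Fact p.Prime] (x : Fin 2 → ZMod p) : Fin 2 → ZMod p :=
  if x 0 = 0 then ![0, 1] else ![1, x 1 * (x 0)⁻¹]

def Tset (p : ℕ) [Fact p.Prime] : Finset (Fin 2 → ZMod p) :=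
  insert ![0, 1] ((Finset.univ : Finset (ZMod p)).image fun a => ![1, a])

lemma nu_mem (x : Fin 2 → ZMod p) : nu p x ∈ Tset p := by
  unfold nu Tset
  split_ifs with h
  · exact Finset.mem_insert_self _ _
  · exact Finset.mem_insert_of_mem (Finset.mem_image.mpr ⟨_, Finset.mem_univ _, rfl⟩)

lemma Tset_card : (Tset p).card = p + 1 := by
  unfold Tset
  have hinj : Function.Injective (fun a : ZMod p => ![1, a]) := by
    intro a b hab
    simpa using congrFun hab 1
  have hnot : ![0, 1] ∉ ((Finset.univ : Finset (ZMod p)).image fun a => ![1, a]) := by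
    intro h
    obtain ⟨a, -, ha⟩ := Finset.mem_image.mp h
    simpa using congrFun ha 0
  rw [Finset.card_insert_of_notMem hnot, Finset.card_image_of_injective _ hinj,
    Finset.card_univ, ZMod.card]

lemma nu_scale {c : ZMod p} (hc : c ≠ 0) (x : Fin 2 → ZMod p) : nu p (c • x) = nu p x := by
  unfold nu
  have h0 : (c • x) 0 = c * x 0 := rfl
  have h1 : (c • x) 1 = c * x 1 := rfl
  by_cases h : x 0 = 0
  · rw [if_pos h, if_pos (by rw [h0, h, mul_zero])]
  · rw [if_neg h, if_neg (by rw [h0]; exact mul_ne_zero hc h)]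
    congr 1
    funext i
    fin_cases i
    · show c * x 1 * (c * x 0)⁻¹ = x 1 * (x 0)⁻¹
      rw [mul_inv, mul_mul_mul_comm, mul_inv_cancel₀ hc, one_mul]

lemma nu_rep {x : Fin 2 → ZMod p} (hx : x ≠ 0) : ∃ c : ZMod p, c ≠ 0 ∧ x = c • nu p x := by
  unfold nu
  by_cases h : x 0 = 0
  · have h1 : x 1 ≠ 0 := by
      intro h1
      apply hx
      funext i; fin_cases i <;> assumption
    refine ⟨x 1, h1, ?_⟩
    rw [if_pos h]
    funext i; fin_cases i
    · simpa using h
    · simp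
  · refine ⟨x 0, h, ?_⟩
    rw [if_neg h]
    funext i; fin_cases i
    · simp
    · show x 1 = x 0 * (x 1 * (x 0)⁻¹)
      field_simp

lemma nu_eq {x y : Fin 2 → ZMod p} (hx : x ≠ 0) (hy : y ≠ 0) (h : nu p x = nu p y) :
    ∃ c : ZMod p, c ≠ 0 ∧ y = c • x := by
  obtain ⟨c, hc, hcx⟩ := nu_rep hx
  obtain ⟨d, hd, hdy⟩ := nu_rep hy
  refine ⟨d * c⁻¹, mul_ne_zero hd (inv_ne_zero hc), ?_⟩
  have hnux : nu p x = c⁻¹ • x := by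
    conv_rhs => rw [hcx]
    rw [smul_smul, inv_mul_cancel₀ hc, one_smul]
  calc y = d • nu p y := hdy
    _ = d • nu p x := by rw [h]
    _ = d • (c⁻¹ • x) := by rw [hnux]
    _ = (d * c⁻¹) • x := smul_smul d c⁻¹ x

end Nu

lemma even_card_of_invol {α : Type*} [DecidableEq α] (C : Finset α) (σ : α → α)
    (h1 : ∀ x ∈ C, σ x ∈ C) (h2 : ∀ x ∈ C, σ (σ x) = x) (h3 : ∀ x ∈ C, σ x ≠ x) :
    Even C.card := by
  classical
  suffices H : ∀ n : ℕ, ∀ C : Finset α, ∀ σ : α → α, (∀ x ∈ C, σ x ∈ C) →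
      (∀ x ∈ C, σ (σ x) = x) → (∀ x ∈ C, σ x ≠ x) → C.card = n → Even n by
    exact H C.card C σ h1 h2 h3 rfl
  clear h1 h2 h3 C σ
  intro n
  induction n using Nat.strong_induction_on with
  | _ n ih =>
    intro C σ h1 h2 h3 hn
    rcases Finset.eq_empty_or_nonempty C with rfl | ⟨x, hx⟩
    · rw [← hn]
      simp
    · have hσx : σ x ∈ C := h1 x hx
      have hne : σ x ≠ x := h3 x hx
      set D := (C.erase x).erase (σ x) with hD
      have hDsub : D ⊆ C := (Finset.erase_subset _ _).trans (Finset.erase_subset _ _)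
      have hmemD : ∀ y, y ∈ D ↔ y ∈ C ∧ y ≠ x ∧ y ≠ σ x := by
        intro y
        simp only [hD, Finset.mem_erase]
        tauto
      have hcardD : D.card = n - 2 := by
        rw [hD, Finset.card_erase_of_mem (Finset.mem_erase.mpr ⟨hne, hσx⟩),
          Finset.card_erase_of_mem hx, hn]
        omega
      have h2n : 2 ≤ n := by
        have : ({x, σ x} : Finset α) ⊆ C := by
          intro y hy
          simp only [Finset.mem_insert, Finset.mem_singleton] at hy
          rcases hy with rfl | rfl <;> assumption
        have := Finset.card_le_card this
        rw [Finset.card_insert_of_notMem (by simpa using hne.symm), Finset.card_singleton] at this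
        omega
      have hevD : Even (D.card) := by
        have := ih (n - 2) (by omega) D σ ?_ ?_ ?_ hcardD
        · rw [hcardD]; exact this
        · intro y hy
          rw [hmemD] at hy ⊢
          refine ⟨h1 y hy.1, ?_, ?_⟩
          · intro hxy
            exact hy.2.2 (by rw [← hxy, h2 y hy.1])
          · intro hxy
            have := congrArg σ hxy
            rw [h2 y hy.1, h2 x hx] at this
            exact hy.2.1 this
        · intro y hy
          exact h2 y (hDsub hy)
        · intro y hy
          exact h3 y (hDsub hy)
      rw [hcardD] at hevD
      have hn2 : n = (n - 2) + 2 := by omega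
      rw [hn2]
      exact hevD.add (even_two)

section Qproj
variable {p : ℕ} [hpf : Fact p.Prime] {M : Type*} [AddCommGroup M] [Module (ZMod p) M]

lemma exists_qproj [FiniteDimensional (ZMod p) M] (U : Submodule (ZMod p) M)
    (h : finrank (ZMod p) (M ⧸ U) = 2) :
    ∃ ρ : M →ₗ[ZMod p] (Fin 2 → ZMod p), ∀ x, ρ x = 0 ↔ x ∈ U := by
  let b := Module.finBasisOfFinrankEq (ZMod p) (M ⧸ U) h
  refine ⟨b.equivFun.toLinearMap.comp U.mkQ, fun x => ?_⟩
  rw [LinearMap.comp_apply]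
  show b.equivFun (U.mkQ x) = 0 ↔ x ∈ U
  rw [LinearEquiv.map_eq_zero_iff, Submodule.mkQ_apply, Submodule.Quotient.mk_eq_zero]

lemma finrank_span_pair {u v : M} (h : ∀ a b : ZMod p, a • u + b • v = 0 → a = 0 ∧ b = 0) :
    finrank (ZMod p) (span (ZMod p) {u, v} : Submodule (ZMod p) M) = 2 := by
  have hrange : Set.range ![u, v] = {u, v} := by
    ext z
    simp only [Set.mem_range, Fin.exists_fin_two, Set.mem_insert_iff, Set.mem_singleton_iff]
    constructor
    · rintro (h | h) <;> simp [← h]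
    · rintro (rfl | rfl)
      · exact Or.inl rfl
      · exact Or.inr rfl
  have hli : LinearIndependent (ZMod p) ![u, v] := by
    rw [Fintype.linearIndependent_iff]
    intro g hg
    have := h (g 0) (g 1) (by simpa [Fin.sum_univ_two] using hg)
    intro i
    fin_cases i
    · exact this.1
    · exact this.2
  have := finrank_span_eq_card hli
  rw [hrange] at this
  rw [this]
  simp

lemma finrank_span_triple {u v x : M}
    (h : ∀ a b c : ZMod p, a • u + b • v + c • x = 0 → a = 0 ∧ b = 0 ∧ c = 0) :
    finrank (ZMod p) (span (ZMod p) {u, v, x} : Submodule (ZMod p) M) = 3 := by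
  have hrange : Set.range ![u, v, x] = {u, v, x} := by
    ext z
    constructor
    · rintro ⟨i, rfl⟩
      fin_cases i <;> simp
    · intro hz
      simp only [Set.mem_insert_iff, Set.mem_singleton_iff] at hz
      rcases hz with rfl | rfl | rfl
      · exact ⟨0, rfl⟩
      · exact ⟨1, rfl⟩
      · exact ⟨2, rfl⟩
  have hli : LinearIndependent (ZMod p) ![u, v, x] := by
    rw [Fintype.linearIndependent_iff]
    intro g hg
    have := h (g 0) (g 1) (g 2) (by simpa [Fin.sum_univ_three] using hg)
    intro i
    fin_cases i
    · exact this.1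
    · exact this.2.1
    · exact this.2.2
  have := finrank_span_eq_card hli
  rw [hrange] at this
  rw [this]
  simp

end Qproj


section CapBounds
variable {p : ℕ} [hpf : Fact p.Prime]

lemma IsCap.subset {M : Type*} [AddCommGroup M] [Module (ZMod p) M] {C C' : Finset M}
    (hsub : C' ⊆ C) (h : IsCap p C) : IsCap p C' :=
  ⟨fun v hv => h.1 v (hsub hv),
   fun u hu v hv => h.2.1 u (hsub hu) v (hsub hv),
   fun u hu v hv x hx => h.2.2 u (hsub hu) v (hsub hv) x (hsub hx)⟩

lemma cap1_bound (C : Finset (Fin 1 → ZMod p)) (hcap : IsCap p C) : C.card ≤ 1 := by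
  rw [Finset.card_le_one]
  intro a ha b hb
  by_contra hab
  have ha0 : a ≠ 0 := hcap.1 a ha
  have ha00 : a 0 ≠ 0 := by
    intro h
    apply ha0
    funext i
    rw [Subsingleton.elim i 0]
    simpa using h
  have hrel : (b 0) • a + (-(a 0)) • b = 0 := by
    funext i
    rw [Subsingleton.elim i 0]
    simp only [Pi.add_apply, Pi.smul_apply, smul_eq_mul, Pi.zero_apply]
    ring
  have := hcap.2.1 a ha b hb hab (b 0) (-(a 0)) hrel
  exact ha00 (neg_eq_zero.mp this.2)

lemma cap2_bound (C : Finset (Fin 2 → ZMod p)) (hcap : IsCap p C) : C.card ≤ 2 := by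
  by_contra h
  push_neg at h
  obtain ⟨a, ha, b, hb, c, hc, hab, hac, hbc⟩ := Finset.two_lt_card.mp h
  have hnli : ¬ LinearIndependent (ZMod p) ![a, b, c] := by
    intro hli
    have := hli.fintype_card_le_finrank
    rw [Module.finrank_fin_fun, Fintype.card_fin] at this
    omega
  obtain ⟨g, hsum, i, hgi⟩ := Fintype.not_linearIndependent_iff.mp hnli
  have := hcap.2.2 a ha b hb c hc hab hac hbc (g 0) (g 1) (g 2)
    (by simpa [Fin.sum_univ_three] using hsum)
  apply hgi
  fin_cases i
  · exact this.1
  · exact this.2.1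
  · exact this.2.2

lemma cap3_concrete (hodd : Odd p) (C : Finset (Fin 3 → ZMod p)) (hcap : IsCap p C) :
    C.card ≤ p + 1 := by
  classical
  by_contra hbig
  push_neg at hbig
  obtain ⟨C', hsub, hcard⟩ := Finset.exists_subset_card_eq (show p + 2 ≤ C.card by omega)
  have hcap' : IsCap p C' := hcap.subset hsub
  clear hbig hcap hsub
  have hp3 : 3 ≤ p := by
    have := hpf.out.two_le
    rcases hodd with ⟨k, hk⟩
    omega
  set B : Finset (Fin 3 → ZMod p) :=
    C'.biUnion (fun c => Finset.image (fun k : ZMod p => k • c) Finset.univ) with hB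
  have hBcard : B.card ≤ (p + 2) * p := by
    refine (Finset.card_biUnion_le).trans ?_
    calc ∑ c ∈ C', (Finset.image (fun k : ZMod p => k • c) Finset.univ).card
        ≤ ∑ _c ∈ C', p :=
          Finset.sum_le_sum (fun c _ => (Finset.card_image_le).trans (by simp [ZMod.card]))
      _ = (p + 2) * p := by rw [Finset.sum_const, hcard, smul_eq_mul]
  have hcardV : Fintype.card (Fin 3 → ZMod p) = p ^ 3 := by
    rw [Fintype.card_fun, ZMod.card, Fintype.card_fin]
  obtain ⟨w, hw⟩ : ∃ w, w ∉ B := by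
    by_contra h'
    push_neg at h'
    have huniv : B = Finset.univ := Finset.eq_univ_iff_forall.mpr h'
    have := congrArg Finset.card huniv
    rw [Finset.card_univ, hcardV] at this
    nlinarith [hp3]
  have hwB : ∀ c ∈ C', ∀ k : ZMod p, w ≠ k • c := by
    intro c hc k hk
    exact hw (Finset.mem_biUnion.mpr ⟨c, hc, Finset.mem_image.mpr ⟨k, Finset.mem_univ _, hk.symm⟩⟩)
  -- existence of a partner
  have hex : ∀ u ∈ C', ∃ v, (v ∈ C' ∧ v ≠ u) ∧ ∃ c k : ZMod p, c ≠ 0 ∧ w = c • v + k • u := by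
    intro u hu
    have hu0 : u ≠ 0 := hcap'.1 u hu
    have hq2 : finrank (ZMod p) ((Fin 3 → ZMod p) ⧸ (span (ZMod p) {u})) = 2 := by
      have h1 := finrank_span_singleton (K := ZMod p) hu0
      have h2 := Submodule.finrank_quotient_add_finrank (span (ZMod p) {u})
      rw [h1, Module.finrank_fin_fun] at h2
      omega
    obtain ⟨ρ, hρ⟩ := exists_qproj _ hq2
    have hρC : ∀ v ∈ C', v ≠ u → ρ v ≠ 0 := by
      intro v hv hvu h0
      obtain ⟨k, hk⟩ := Submodule.mem_span_singleton.mp ((hρ v).mp h0)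
      have hrel : k • u + (-1 : ZMod p) • v = 0 := by
        rw [neg_one_smul, hk]
        abel
      have := hcap'.2.1 u hu v hv (Ne.symm hvu) k (-1) hrel
      simpa using this.2
    have hρw : ρ w ≠ 0 := by
      intro h0
      obtain ⟨k, hk⟩ := Submodule.mem_span_singleton.mp ((hρ w).mp h0)
      exact hwB u hu k hk.symm
    have hinj : ∀ v ∈ C'.erase u, ∀ v' ∈ C'.erase u, nu p (ρ v) = nu p (ρ v') → v = v' := by
      intro v hv v' hv' hnu
      by_contra hne
      rw [Finset.mem_erase] at hv hv'
      obtain ⟨c, hc, hcc⟩ := nu_eq (hρC v hv.2 hv.1) (hρC v' hv'.2 hv'.1) hnu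
      have h0 : ρ (v' - c • v) = 0 := by rw [map_sub, map_smul, hcc, sub_self]
      obtain ⟨k, hk⟩ := Submodule.mem_span_singleton.mp ((hρ _).mp h0)
      have hrel : k • u + c • v + (-1 : ZMod p) • v' = 0 := by
        rw [neg_one_smul, hk]
        abel
      have := hcap'.2.2 u hu v hv.2 v' hv'.2 (Ne.symm hv.1) (Ne.symm hv'.1) hne k c (-1) hrel
      simpa using this.2.2
    have hiC : (C'.erase u).card = p + 1 := by
      rw [Finset.card_erase_of_mem hu, hcard]
      omega
    set img := (C'.erase u).image (fun v => nu p (ρ v)) with himg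
    have himgcard : img.card = p + 1 := by
      rw [himg, Finset.card_image_of_injOn
        (fun v hv v' hv' h => hinj v (Finset.mem_coe.mp hv) v' (Finset.mem_coe.mp hv') h), hiC]
    have himgT : img ⊆ Tset p := by
      intro y hy
      obtain ⟨v, -, rfl⟩ := Finset.mem_image.mp hy
      exact nu_mem _
    have himgeq : img = Tset p :=
      Finset.eq_of_subset_of_card_le himgT (by rw [himgcard, Tset_card])
    have hwT : nu p (ρ w) ∈ img := by rw [himgeq]; exact nu_mem _
    obtain ⟨v, hv, hnuv⟩ := Finset.mem_image.mp hwT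
    rw [Finset.mem_erase] at hv
    obtain ⟨c, hc, hcc⟩ := nu_eq (hρC v hv.2 hv.1) hρw hnuv
    have h0 : ρ (w - c • v) = 0 := by rw [map_sub, map_smul, hcc, sub_self]
    obtain ⟨k, hk⟩ := Submodule.mem_span_singleton.mp ((hρ _).mp h0)
    refine ⟨v, ⟨hv.2, hv.1⟩, c, k, hc, ?_⟩
    rw [hk]
    abel
  -- uniqueness of the partner
  have huniq : ∀ u ∈ C', ∀ v v' : Fin 3 → ZMod p,
      ((v ∈ C' ∧ v ≠ u) ∧ ∃ c k : ZMod p, c ≠ 0 ∧ w = c • v + k • u) →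
      ((v' ∈ C' ∧ v' ≠ u) ∧ ∃ c k : ZMod p, c ≠ 0 ∧ w = c • v' + k • u) → v = v' := by
    rintro u hu v v' ⟨⟨hv, hvu⟩, c, k, hc, hw1⟩ ⟨⟨hv', hvu'⟩, c', k', hc', hw2⟩
    by_contra hne
    have h0 : (c • v + k • u) - (c' • v' + k' • u) = 0 := by
      rw [← hw1, ← hw2, sub_self]
    have hrel : c • v + (-c') • v' + (k - k') • u = 0 := by
      calc c • v + (-c') • v' + (k - k') • u
          = (c • v + k • u) - (c' • v' + k' • u) := by rw [neg_smul, sub_smul]; abel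
        _ = 0 := h0
    have := hcap'.2.2 v hv v' hv' u hu hne hvu hvu' c (-c') (k - k') hrel
    exact hc this.1
  -- symmetry of the partner relation
  have hsym : ∀ u ∈ C', ∀ v,
      ((v ∈ C' ∧ v ≠ u) ∧ ∃ c k : ZMod p, c ≠ 0 ∧ w = c • v + k • u) →
      ((u ∈ C' ∧ u ≠ v) ∧ ∃ c k : ZMod p, c ≠ 0 ∧ w = c • u + k • v) := by
    rintro u hu v ⟨⟨hv, hvu⟩, c, k, hc, hw1⟩
    have hk0 : k ≠ 0 := by
      rintro rfl
      rw [zero_smul, add_zero] at hw1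
      exact hwB v hv c hw1
    exact ⟨⟨hu, Ne.symm hvu⟩, k, c, hk0, by rw [hw1]; abel⟩
  -- the involution
  set σ : (Fin 3 → ZMod p) → (Fin 3 → ZMod p) := fun u =>
    if h : u ∈ C' then (hex u h).choose else u with hσ
  have hσspec : ∀ u, ∀ h : u ∈ C',
      ((σ u ∈ C' ∧ σ u ≠ u) ∧ ∃ c k : ZMod p, c ≠ 0 ∧ w = c • (σ u) + k • u) := by
    intro u h
    rw [hσ]
    simp only [dif_pos h]
    exact (hex u h).choose_spec
  have h1 : ∀ x ∈ C', σ x ∈ C' := fun x hx => ((hσspec x hx).1).1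
  have h3 : ∀ x ∈ C', σ x ≠ x := fun x hx => ((hσspec x hx).1).2
  have h2 : ∀ x ∈ C', σ (σ x) = x := by
    intro x hx
    exact huniq (σ x) (h1 x hx) _ x (hσspec (σ x) (h1 x hx)) (hsym x hx (σ x) (hσspec x hx))
  have heven := even_card_of_invol C' σ h1 h2 h3
  rw [hcard] at heven
  rcases hodd with ⟨k, hk⟩
  rcases heven with ⟨m, hm⟩
  omega

end CapBounds

section Cap34
variable {p : ℕ} [hpf : Fact p.Prime]

lemma cap3_in_submodule (hodd : Odd p) {M : Type*} [AddCommGroup M] [Module (ZMod p) M]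
    (W : Submodule (ZMod p) M) [FiniteDimensional (ZMod p) W] (h3 : finrank (ZMod p) W = 3)
    (D : Finset M) (hD : ∀ x ∈ D, x ∈ W) (hcap : IsCap p D) : D.card ≤ p + 1 := by
  classical
  let e : W ≃ₗ[ZMod p] (Fin 3 → ZMod p) :=
    LinearEquiv.ofFinrankEq _ _ (by rw [h3, Module.finrank_fin_fun])
  let f : M → (Fin 3 → ZMod p) := fun x => if h : x ∈ W then e ⟨x, h⟩ else 0
  have hfD : ∀ x, ∀ hx : x ∈ D, f x = e ⟨x, hD x hx⟩ := fun x hx => dif_pos (hD x hx)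
  have hinj : Set.InjOn f ↑D := by
    intro x hx y hy hxy
    rw [hfD x (Finset.mem_coe.mp hx), hfD y (Finset.mem_coe.mp hy)] at hxy
    have := e.injective hxy
    exact congrArg Subtype.val this
  have hcard : (D.image f).card = D.card := Finset.card_image_of_injOn hinj
  refine le_trans (le_of_eq hcard.symm) (cap3_concrete hodd _ ?_)
  have hmem : ∀ y ∈ D.image f, ∃ x, ∃ hx : x ∈ D, y = e ⟨x, hD x hx⟩ := by
    intro y hy
    obtain ⟨x, hx, rfl⟩ := Finset.mem_image.mp hy
    exact ⟨x, hx, hfD x hx⟩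
  refine ⟨?_, ?_, ?_⟩
  · intro y hy
    obtain ⟨x, hx, rfl⟩ := hmem y hy
    intro h0
    have h1 : (⟨x, hD x hx⟩ : W) = 0 := e.map_eq_zero_iff.mp h0
    exact hcap.1 x hx (by simpa using congrArg Subtype.val h1)
  · intro y hy y' hy' hne a b hab
    obtain ⟨x, hx, rfl⟩ := hmem y hy
    obtain ⟨x', hx', rfl⟩ := hmem y' hy'
    have hab' : e (a • (⟨x, hD x hx⟩ : W) + b • ⟨x', hD x' hx'⟩) = 0 := by
      rw [map_add, map_smul, map_smul]; exact hab
    have h0 := e.map_eq_zero_iff.mp hab'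
    have hxx : a • x + b • x' = 0 := by simpa using congrArg Subtype.val h0
    exact hcap.2.1 x hx x' hx' (fun h => hne (by subst h; rfl)) a b hxx
  · intro y hy y' hy' y'' hy'' hne1 hne2 hne3 a b c habc
    obtain ⟨x, hx, rfl⟩ := hmem y hy
    obtain ⟨x', hx', rfl⟩ := hmem y' hy'
    obtain ⟨x'', hx'', rfl⟩ := hmem y'' hy''
    have hab' : e (a • (⟨x, hD x hx⟩ : W) + b • ⟨x', hD x' hx'⟩ + c • ⟨x'', hD x'' hx''⟩) = 0 := by
      rw [map_add, map_add, map_smul, map_smul, map_smul]; exact habc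
    have h0 := e.map_eq_zero_iff.mp hab'
    have hxx : a • x + b • x' + c • x'' = 0 := by simpa using congrArg Subtype.val h0
    exact hcap.2.2 x hx x' hx' x'' hx'' (fun h => hne1 (by subst h; rfl))
      (fun h => hne2 (by subst h; rfl)) (fun h => hne3 (by subst h; rfl)) a b c hxx

lemma cap4_bound (hodd : Odd p) (C : Finset (Fin 4 → ZMod p)) (hcap : IsCap p C) :
    C.card ≤ p ^ 2 + 1 := by
  classical
  by_contra hbig
  push_neg at hbig
  obtain ⟨C', hsub, hcard⟩ := Finset.exists_subset_card_eq (show p ^ 2 + 2 ≤ C.card by omega)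
  have hcap' : IsCap p C' := hcap.subset hsub
  clear hbig hcap hsub
  have hp3 : 3 ≤ p := by
    have := hpf.out.two_le
    rcases hodd with ⟨k, hk⟩
    omega
  -- pick two distinct points
  obtain ⟨u, hu⟩ : C'.Nonempty := Finset.card_pos.mp (by omega)
  obtain ⟨v, hv⟩ : (C'.erase u).Nonempty := Finset.card_pos.mp (by
    rw [Finset.card_erase_of_mem hu]; omega)
  have hvC : v ∈ C' := (Finset.mem_erase.mp hv).2
  have hvu : v ≠ u := (Finset.mem_erase.mp hv).1
  set U : Submodule (ZMod p) (Fin 4 → ZMod p) := span (ZMod p) {u, v} with hU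
  have hU2 : finrank (ZMod p) U = 2 :=
    finrank_span_pair (fun a b hab => hcap'.2.1 u hu v hvC (Ne.symm hvu) a b hab)
  have hq2 : finrank (ZMod p) ((Fin 4 → ZMod p) ⧸ U) = 2 := by
    have h2 := Submodule.finrank_quotient_add_finrank U
    rw [hU2, Module.finrank_fin_fun] at h2
    omega
  obtain ⟨ρ, hρ⟩ := exists_qproj U hq2
  set s : Finset (Fin 4 → ZMod p) := (C'.erase u).erase v with hs
  have hscard : s.card = p ^ 2 := by
    rw [hs, Finset.card_erase_of_mem (Finset.mem_erase.mpr ⟨Ne.symm ?_, hvC⟩),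
      Finset.card_erase_of_mem hu, hcard]
    · omega
    · exact Ne.symm hvu
  have hsmem : ∀ x ∈ s, x ∈ C' ∧ x ≠ u ∧ x ≠ v := by
    intro x hx
    rw [hs, Finset.mem_erase, Finset.mem_erase] at hx
    exact ⟨hx.2.2, hx.2.1, hx.1⟩
  have hρs : ∀ x ∈ s, ρ x ≠ 0 := by
    intro x hx h0
    obtain ⟨hxC, hxu, hxv⟩ := hsmem x hx
    obtain ⟨a, b, hab⟩ := Submodule.mem_span_pair.mp ((hρ x).mp h0)
    have hrel : a • u + b • v + (-1 : ZMod p) • x = 0 := by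
      rw [neg_one_smul, hab]
      abel
    have := hcap'.2.2 u hu v hvC x hxC (Ne.symm hvu) (Ne.symm hxu) (Ne.symm hxv)
      a b (-1) hrel
    simpa using this.2.2
  -- fibers of the projective projection have at most p - 1 elements
  have hfib : ∀ τ ∈ s.image (fun x => nu p (ρ x)), {x ∈ s | nu p (ρ x) = τ}.card ≤ p - 1 := by
    intro τ hτ
    obtain ⟨x₀, hx₀, hτ0⟩ := Finset.mem_image.mp hτ
    set Fib : Finset (Fin 4 → ZMod p) := {x ∈ s | nu p (ρ x) = τ} with hFib
    have hx₀F : x₀ ∈ Fib := by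
      rw [hFib, Finset.mem_filter]
      exact ⟨hx₀, hτ0⟩
    obtain ⟨hx₀C, hx₀u, hx₀v⟩ := hsmem x₀ hx₀
    set W : Submodule (ZMod p) (Fin 4 → ZMod p) := span (ZMod p) {u, v, x₀} with hW
    have hW3 : finrank (ZMod p) W = 3 := by
      refine finrank_span_triple (fun a b c habc => ?_)
      exact hcap'.2.2 u hu v hvC x₀ hx₀C (Ne.symm hvu) (Ne.symm hx₀u) (Ne.symm hx₀v) a b c habc
    have hUW : U ≤ W := by
      rw [hU, hW]
      apply Submodule.span_mono
      intro z hz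
      rcases hz with rfl | hz
      · exact Set.mem_insert _ _
      · rw [Set.mem_singleton_iff] at hz
        subst hz
        exact Set.mem_insert_of_mem _ (Set.mem_insert _ _)
    set D : Finset (Fin 4 → ZMod p) := insert u (insert v Fib) with hD
    have hDC : D ⊆ C' := by
      intro z hz
      rw [hD, Finset.mem_insert, Finset.mem_insert] at hz
      rcases hz with rfl | rfl | hz
      · exact hu
      · exact hvC
      · exact (hsmem z (Finset.mem_filter.mp hz).1).1
    have hDW : ∀ z ∈ D, z ∈ W := by
      intro z hz
      rw [hD, Finset.mem_insert, Finset.mem_insert] at hz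
      rcases hz with rfl | rfl | hz
      · exact Submodule.subset_span (Set.mem_insert _ _)
      · exact Submodule.subset_span (Set.mem_insert_of_mem _ (Set.mem_insert _ _))
      · -- z in the fiber: z - c • x₀ ∈ U ⊆ W
        rw [hFib, Finset.mem_filter] at hz
        obtain ⟨hzs, hzτ⟩ := hz
        have h1 : nu p (ρ x₀) = nu p (ρ z) := by rw [hτ0, hzτ]
        obtain ⟨c, hc, hcc⟩ := nu_eq (hρs x₀ hx₀) (hρs z hzs) h1
        have h0 : ρ (z - c • x₀) = 0 := by rw [map_sub, map_smul, hcc, sub_self]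
        have hUmem : z - c • x₀ ∈ U := (hρ _).mp h0
        have : z = (z - c • x₀) + c • x₀ := by abel
        rw [this]
        exact W.add_mem (hUW hUmem)
          (W.smul_mem c (Submodule.subset_span
            (Set.mem_insert_of_mem _ (Set.mem_insert_of_mem _ rfl))))
    have hDcard : D.card = Fib.card + 2 := by
      have hvF : v ∉ Fib := by
        rw [hFib, Finset.mem_filter]
        rintro ⟨hzs, -⟩
        exact (hsmem v hzs).2.2 rfl
      have huF : u ∉ insert v Fib := by
        rw [Finset.mem_insert]
        rintro (rfl | huf)
        · exact hvu rfl
        · rw [hFib, Finset.mem_filter] at huf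
          exact (hsmem u huf.1).2.1 rfl
      rw [hD, Finset.card_insert_of_notMem huF, Finset.card_insert_of_notMem hvF]
    have := cap3_in_submodule hodd W hW3 D hDW (hcap'.subset hDC)
    omega
  have htotal := Finset.card_le_mul_card_image s (p - 1) hfib
  have himgT : s.image (fun x => nu p (ρ x)) ⊆ Tset p := by
    intro y hy
    obtain ⟨x, -, rfl⟩ := Finset.mem_image.mp hy
    exact nu_mem _
  have himgcard : (s.image (fun x => nu p (ρ x))).card ≤ p + 1 := by
    rw [← Tset_card (p := p)]
    exact Finset.card_le_card himgT
  rw [hscard] at htotal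
  have : p ^ 2 ≤ (p - 1) * (p + 1) :=
    htotal.trans (Nat.mul_le_mul_left _ himgcard)
  obtain ⟨q, rfl⟩ : ∃ q, p = q + 1 := ⟨p - 1, by omega⟩
  simp only [Nat.add_sub_cancel] at this
  nlinarith

end Cap34

section Constructions
variable {p : ℕ} [hpf : Fact p.Prime]

lemma cap1_ex : ∃ C : Finset (Fin 1 → ZMod p), IsCap p C ∧ C.card = 1 := by
  refine ⟨{fun _ => 1}, ⟨?_, ?_, ?_⟩, Finset.card_singleton _⟩
  · intro v hv
    rw [Finset.mem_singleton] at hv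
    subst hv
    intro h
    simpa using congrFun h 0
  · intro u hu v hv huv
    rw [Finset.mem_singleton] at hu hv
    exact absurd (hu.trans hv.symm) huv
  · intro u hu v hv x hx huv hux hvx a b c habc
    rw [Finset.mem_singleton] at hu hv
    exact absurd (hu.trans hv.symm) huv

lemma cap2_ex : ∃ C : Finset (Fin 2 → ZMod p), IsCap p C ∧ C.card = 2 := by
  have hne : (![1, 0] : Fin 2 → ZMod p) ≠ ![0, 1] := by
    intro h
    simpa using congrFun h 0
  refine ⟨{![1, 0], ![0, 1]}, ⟨?_, ?_, ?_⟩, ?_⟩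
  · intro v hv
    rw [Finset.mem_insert, Finset.mem_singleton] at hv
    rcases hv with rfl | rfl
    · intro h; simpa using congrFun h 0
    · intro h; simpa using congrFun h 1
  · intro u hu v hv huv a b hab
    rw [Finset.mem_insert, Finset.mem_singleton] at hu hv
    rcases hu with rfl | rfl <;> rcases hv with rfl | rfl
    · exact absurd rfl huv
    · exact ⟨by simpa using congrFun hab 0, by simpa using congrFun hab 1⟩
    · exact ⟨by simpa using congrFun hab 1, by simpa using congrFun hab 0⟩
    · exact absurd rfl huv
  · intro u hu v hv x hx huv hux hvx a b c habc
    rw [Finset.mem_insert, Finset.mem_singleton] at hu hv hx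
    rcases hu with rfl | rfl <;> rcases hv with rfl | rfl <;> rcases hx with rfl | rfl <;>
      first
        | exact absurd rfl huv
        | exact absurd rfl hux
        | exact absurd rfl hvx
  · rw [Finset.card_insert_of_notMem (by simpa using hne), Finset.card_singleton]

lemma conic_ex : ∃ C : Finset (Fin 3 → ZMod p), IsCap p C ∧ C.card = p + 1 := by
  classical
  set aff : ZMod p → (Fin 3 → ZMod p) := fun t => ![1, t, t * t] with haff
  set inf : Fin 3 → ZMod p := ![0, 0, 1] with hinf
  have key2aff : ∀ t s a b : ZMod p, t ≠ s → a • aff t + b • aff s = 0 → a = 0 ∧ b = 0 := by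
    intro t s a b hts hab
    have e0 : a + b = 0 := by simpa [haff] using congrFun hab 0
    have e1 : a * t + b * s = 0 := by
      have := congrFun hab 1
      simp [haff] at this
      linear_combination this
    have ha : a * (t - s) = 0 := by linear_combination e1 - s * e0
    rcases mul_eq_zero.mp ha with ha | h
    · exact ⟨ha, by linear_combination e0 - ha⟩
    · exact absurd (sub_eq_zero.mp h) hts
  have key2inf : ∀ t a b : ZMod p, a • aff t + b • inf = 0 → a = 0 ∧ b = 0 := by
    intro t a b hab
    have e0 : a = 0 := by simpa [haff, hinf] using congrFun hab 0
    have e2 : a * (t * t) + b = 0 := by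
      have := congrFun hab 2
      simp [haff, hinf] at this
      linear_combination this
    exact ⟨e0, by linear_combination e2 - (t * t) * e0⟩
  have key3aff : ∀ t s r a b c : ZMod p, t ≠ s → t ≠ r → s ≠ r →
      a • aff t + b • aff s + c • aff r = 0 → a = 0 ∧ b = 0 ∧ c = 0 := by
    intro t s r a b c hts htr hsr habc
    have e0 : a + b + c = 0 := by simpa [haff] using congrFun habc 0
    have e1 : a * t + b * s + c * r = 0 := by
      have := congrFun habc 1
      simp [haff] at this
      linear_combination this
    have e2 : a * (t * t) + b * (s * s) + c * (r * r) = 0 := by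
      have := congrFun habc 2
      simp [haff] at this
      linear_combination this
    have ha : a * ((t - s) * (t - r)) = 0 := by
      linear_combination e2 - (s + r) * e1 + (s * r) * e0
    have hb : b * ((s - t) * (s - r)) = 0 := by
      linear_combination e2 - (t + r) * e1 + (t * r) * e0
    have hc : c * ((r - t) * (r - s)) = 0 := by
      linear_combination e2 - (t + s) * e1 + (t * s) * e0
    refine ⟨?_, ?_, ?_⟩
    · rcases mul_eq_zero.mp ha with h | h
      · exact h
      · rcases mul_eq_zero.mp h with h | h
        · exact absurd (sub_eq_zero.mp h) hts
        · exact absurd (sub_eq_zero.mp h) htr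
    · rcases mul_eq_zero.mp hb with h | h
      · exact h
      · rcases mul_eq_zero.mp h with h | h
        · exact absurd (sub_eq_zero.mp h) (Ne.symm hts)
        · exact absurd (sub_eq_zero.mp h) hsr
    · rcases mul_eq_zero.mp hc with h | h
      · exact h
      · rcases mul_eq_zero.mp h with h | h
        · exact absurd (sub_eq_zero.mp h) (Ne.symm htr)
        · exact absurd (sub_eq_zero.mp h) (Ne.symm hsr)
  have key3inf : ∀ t s a b c : ZMod p, t ≠ s →
      a • aff t + b • aff s + c • inf = 0 → a = 0 ∧ b = 0 ∧ c = 0 := by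
    intro t s a b c hts habc
    have e0 : a + b = 0 := by simpa [haff, hinf] using congrFun habc 0
    have e1 : a * t + b * s = 0 := by
      have := congrFun habc 1
      simp [haff, hinf] at this
      linear_combination this
    have e2 : a * (t * t) + b * (s * s) + c = 0 := by
      have := congrFun habc 2
      simp [haff, hinf] at this
      linear_combination this
    have ha : a * (t - s) = 0 := by linear_combination e1 - s * e0
    rcases mul_eq_zero.mp ha with ha | h
    · have hb : b = 0 := by linear_combination e0 - ha
      exact ⟨ha, hb, by linear_combination e2 - (t * t) * ha - (s * s) * hb⟩
    · exact absurd (sub_eq_zero.mp h) hts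
  set C : Finset (Fin 3 → ZMod p) := insert inf (Finset.univ.image aff) with hC
  have haffinf : ∀ t, aff t ≠ inf := by
    intro t h
    simpa [haff, hinf] using congrFun h 0
  have haffinj : Function.Injective aff := by
    intro t s h
    simpa [haff] using congrFun h 1
  have hmemC : ∀ z ∈ C, z = inf ∨ ∃ t, z = aff t := by
    intro z hz
    rw [hC, Finset.mem_insert] at hz
    rcases hz with rfl | hz
    · exact Or.inl rfl
    · obtain ⟨t, -, rfl⟩ := Finset.mem_image.mp hz
      exact Or.inr ⟨t, rfl⟩
  refine ⟨C, ⟨?_, ?_, ?_⟩, ?_⟩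
  · intro v hv
    rcases hmemC v hv with rfl | ⟨t, rfl⟩
    · intro h; simpa [hinf] using congrFun h 2
    · intro h; simpa [haff] using congrFun h 0
  · intro u hu v hv huv a b hab
    rcases hmemC u hu with rfl | ⟨t, rfl⟩ <;> rcases hmemC v hv with rfl | ⟨s, rfl⟩
    · exact absurd rfl huv
    · have h' : b • aff s + a • inf = 0 := by rw [← hab]; abel
      have := key2inf s b a h'
      exact ⟨this.2, this.1⟩
    · exact key2inf t a b hab
    · exact key2aff t s a b (fun h => huv (by rw [h])) hab
  · intro u hu v hv x hx huv hux hvx a b c habc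
    rcases hmemC u hu with rfl | ⟨t, rfl⟩ <;> rcases hmemC v hv with rfl | ⟨s, rfl⟩ <;>
      rcases hmemC x hx with rfl | ⟨r, rfl⟩
    · exact absurd rfl huv
    · exact absurd rfl huv
    · exact absurd rfl hux
    · have h' : b • aff s + c • aff r + a • inf = 0 := by rw [← habc]; abel
      have := key3inf s r b c a (fun h => hvx (by rw [h])) h'
      exact ⟨this.2.2, this.1, this.2.1⟩
    · exact absurd rfl hvx
    · have h' : a • aff t + c • aff r + b • inf = 0 := by rw [← habc]; abel
      have := key3inf t r a c b (fun h => hux (by rw [h])) h'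
      exact ⟨this.1, this.2.2, this.2.1⟩
    · exact key3inf t s a b c (fun h => huv (by rw [h])) habc
    · exact key3aff t s r a b c (fun h => huv (by rw [h])) (fun h => hux (by rw [h]))
        (fun h => hvx (by rw [h])) habc
  · rw [hC, Finset.card_insert_of_notMem, Finset.card_image_of_injective _ haffinj,
      Finset.card_univ, ZMod.card]
    intro h
    obtain ⟨t, -, ht⟩ := Finset.mem_image.mp h
    exact haffinf t ht

end Constructions

section Quadric
variable {p : ℕ} [hpf : Fact p.Prime]

lemma quadric_ex (hodd : Odd p) :
    ∃ C : Finset (Fin 4 → ZMod p), IsCap p C ∧ C.card = p ^ 2 + 1 := by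
  classical
  have hp2 : p ≠ 2 := by
    rcases hodd with ⟨k, hk⟩
    have := hpf.out.two_le
    omega
  obtain ⟨d, hd⟩ := FiniteField.exists_nonsquare (F := ZMod p)
    (by rw [ZMod.ringChar_zmod_n]; exact fun h => hp2 (by omega))
  have hdkey : ∀ s t : ZMod p, s * s - d * (t * t) = 0 → s = 0 ∧ t = 0 := by
    intro s t h
    by_cases ht : t = 0
    · subst ht
      refine ⟨?_, rfl⟩
      have : s * s = 0 := by linear_combination h
      exact mul_self_eq_zero.mp this
    · exfalso
      apply hd
      refine ⟨s * t⁻¹, ?_⟩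
      field_simp
      linear_combination -h
  have hdiff : ∀ s t u v : ZMod p, ¬(s = u ∧ t = v) →
      (s - u) * (s - u) - d * ((t - v) * (t - v)) ≠ 0 := by
    intro s t u v hne h
    obtain ⟨h1, h2⟩ := hdkey _ _ h
    exact hne ⟨by linear_combination h1, by linear_combination h2⟩
  set aff : ZMod p × ZMod p → (Fin 4 → ZMod p) :=
    fun q => ![1, q.1 * q.1 - d * (q.2 * q.2), q.1, q.2] with haff
  set inf : Fin 4 → ZMod p := ![0, 1, 0, 0] with hinf
  -- pair lemma, affine-affine
  have key2aff : ∀ s t u v a b : ZMod p, ¬(s = u ∧ t = v) →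
      a • aff (s, t) + b • aff (u, v) = 0 → a = 0 ∧ b = 0 := by
    intro s t u v a b hne hab
    have e0 : a + b = 0 := by simpa [haff] using congrFun hab 0
    have e2 : a * s + b * u = 0 := by
      have := congrFun hab 2
      simp [haff] at this
      linear_combination this
    have e3 : a * t + b * v = 0 := by
      have := congrFun hab 3
      simp [haff] at this
      linear_combination this
    have ha1 : a * (s - u) = 0 := by linear_combination e2 - u * e0
    have ha2 : a * (t - v) = 0 := by linear_combination e3 - v * e0
    have ha : a = 0 := by
      by_cases hsu : s = u
      · have htv : t ≠ v := fun h => hne ⟨hsu, h⟩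
        rcases mul_eq_zero.mp ha2 with h | h
        · exact h
        · exact absurd (sub_eq_zero.mp h) htv
      · rcases mul_eq_zero.mp ha1 with h | h
        · exact h
        · exact absurd (sub_eq_zero.mp h) hsu
    exact ⟨ha, by linear_combination e0 - ha⟩
  -- pair lemma, affine-infinity
  have key2inf : ∀ s t a b : ZMod p, a • aff (s, t) + b • inf = 0 → a = 0 ∧ b = 0 := by
    intro s t a b hab
    have e0 : a = 0 := by simpa [haff, hinf] using congrFun hab 0
    have e1 : a * (s * s - d * (t * t)) + b = 0 := by
      have := congrFun hab 1
      simp [haff, hinf] at this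
      linear_combination this
    exact ⟨e0, by linear_combination e1 - (s * s - d * (t * t)) * e0⟩
  -- triple lemma, three affine points
  have key3aff : ∀ s t u v x y a b c : ZMod p, ¬(s = u ∧ t = v) → ¬(s = x ∧ t = y) →
      ¬(u = x ∧ v = y) →
      a • aff (s, t) + b • aff (u, v) + c • aff (x, y) = 0 → a = 0 ∧ b = 0 ∧ c = 0 := by
    intro s t u v x y a b c hne1 hne2 hne3 habc
    have e0 : a + b + c = 0 := by simpa [haff] using congrFun habc 0
    have e1 : a * (s * s - d * (t * t)) + b * (u * u - d * (v * v))
        + c * (x * x - d * (y * y)) = 0 := by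
      have := congrFun habc 1
      simp [haff] at this
      linear_combination this
    have e2 : a * s + b * u + c * x = 0 := by
      have := congrFun habc 2
      simp [haff] at this
      linear_combination this
    have e3 : a * t + b * v + c * y = 0 := by
      have := congrFun habc 3
      simp [haff] at this
      linear_combination this
    by_cases ha : a = 0
    · -- reduces to the pair (u,v), (x,y)
      have hb1 : b * (u - x) = 0 := by linear_combination e2 - x * e0 + (x - s) * ha
      have hb2 : b * (v - y) = 0 := by linear_combination e3 - y * e0 + (y - t) * ha
      have hb : b = 0 := by
        by_cases hux : u = x
        · have hvy : v ≠ y := fun h => hne3 ⟨hux, h⟩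
          rcases mul_eq_zero.mp hb2 with h | h
          · exact h
          · exact absurd (sub_eq_zero.mp h) hvy
        · rcases mul_eq_zero.mp hb1 with h | h
          · exact h
          · exact absurd (sub_eq_zero.mp h) hux
      exact ⟨ha, hb, by linear_combination e0 - ha - hb⟩
    · by_cases hb : b = 0
      · -- reduces to the pair (s,t), (x,y); contradiction with a ≠ 0
        exfalso
        have ha1 : a * (s - x) = 0 := by linear_combination e2 - x * e0 + (x - u) * hb
        have ha2 : a * (t - y) = 0 := by linear_combination e3 - y * e0 + (y - v) * hb
        apply ha
        by_cases hsx : s = x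
        · have hty : t ≠ y := fun h => hne2 ⟨hsx, h⟩
          rcases mul_eq_zero.mp ha2 with h | h
          · exact h
          · exact absurd (sub_eq_zero.mp h) hty
        · rcases mul_eq_zero.mp ha1 with h | h
          · exact h
          · exact absurd (sub_eq_zero.mp h) hsx
      · -- both a and b nonzero: the quadric contains no such line
        exfalso
        have key : a * b * ((s - u) * (s - u) - d * ((t - v) * (t - v))) = 0 := by
          linear_combination (-c) * e1 + (a * (s * s - d * (t * t))
            + b * (u * u - d * (v * v))) * e0 - (a * s + b * u - c * x) * e2
            + d * (a * t + b * v - c * y) * e3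
        rcases mul_eq_zero.mp key with h | h
        · rcases mul_eq_zero.mp h with h | h
          · exact ha h
          · exact hb h
        · exact hdiff s t u v hne1 h
  -- triple lemma, two affine and infinity
  have key3inf : ∀ s t u v a b c : ZMod p, ¬(s = u ∧ t = v) →
      a • aff (s, t) + b • aff (u, v) + c • inf = 0 → a = 0 ∧ b = 0 ∧ c = 0 := by
    intro s t u v a b c hne habc
    have e0 : a + b = 0 := by simpa [haff, hinf] using congrFun habc 0
    have e1 : a * (s * s - d * (t * t)) + b * (u * u - d * (v * v)) + c = 0 := by
      have := congrFun habc 1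
      simp [haff, hinf] at this
      linear_combination this
    have e2 : a * s + b * u = 0 := by
      have := congrFun habc 2
      simp [haff, hinf] at this
      linear_combination this
    have e3 : a * t + b * v = 0 := by
      have := congrFun habc 3
      simp [haff, hinf] at this
      linear_combination this
    have ha1 : a * (s - u) = 0 := by linear_combination e2 - u * e0
    have ha2 : a * (t - v) = 0 := by linear_combination e3 - v * e0
    have ha : a = 0 := by
      by_cases hsu : s = u
      · have htv : t ≠ v := fun h => hne ⟨hsu, h⟩
        rcases mul_eq_zero.mp ha2 with h | h
        · exact h
        · exact absurd (sub_eq_zero.mp h) htv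
      · rcases mul_eq_zero.mp ha1 with h | h
        · exact h
        · exact absurd (sub_eq_zero.mp h) hsu
    have hb : b = 0 := by linear_combination e0 - ha
    refine ⟨ha, hb, by linear_combination e1 - (s * s - d * (t * t)) * ha
      - (u * u - d * (v * v)) * hb⟩
  set C : Finset (Fin 4 → ZMod p) := insert inf (Finset.univ.image aff) with hC
  have haffinf : ∀ q, aff q ≠ inf := by
    intro q h
    simpa [haff, hinf] using congrFun h 0
  have haffinj : Function.Injective aff := by
    intro q r h
    have h2 : q.1 = r.1 := by simpa [haff] using congrFun h 2
    have h3 : q.2 = r.2 := by simpa [haff] using congrFun h 3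
    exact Prod.ext h2 h3
  have hmemC : ∀ z ∈ C, z = inf ∨ ∃ q, z = aff q := by
    intro z hz
    rw [hC, Finset.mem_insert] at hz
    rcases hz with rfl | hz
    · exact Or.inl rfl
    · obtain ⟨q, -, rfl⟩ := Finset.mem_image.mp hz
      exact Or.inr ⟨q, rfl⟩
  have hpairne : ∀ q r : ZMod p × ZMod p, aff q ≠ aff r → ¬(q.1 = r.1 ∧ q.2 = r.2) := by
    rintro q r hqr ⟨h1, h2⟩
    exact hqr (by rw [Prod.ext h1 h2])
  refine ⟨C, ⟨?_, ?_, ?_⟩, ?_⟩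
  · intro v hv
    rcases hmemC v hv with rfl | ⟨q, rfl⟩
    · intro h; simpa [hinf] using congrFun h 1
    · intro h; simpa [haff] using congrFun h 0
  · intro u hu v hv huv a b hab
    rcases hmemC u hu with rfl | ⟨q, rfl⟩ <;> rcases hmemC v hv with rfl | ⟨r, rfl⟩
    · exact absurd rfl huv
    · have h' : b • aff r + a • inf = 0 := by rw [← hab]; abel
      have := key2inf r.1 r.2 b a h'
      exact ⟨this.2, this.1⟩
    · exact key2inf q.1 q.2 a b hab
    · exact key2aff q.1 q.2 r.1 r.2 a b (hpairne q r huv) hab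
  · intro u hu v hv x hx huv hux hvx a b c habc
    rcases hmemC u hu with rfl | ⟨q, rfl⟩ <;> rcases hmemC v hv with rfl | ⟨r, rfl⟩ <;>
      rcases hmemC x hx with rfl | ⟨w, rfl⟩
    · exact absurd rfl huv
    · exact absurd rfl huv
    · exact absurd rfl hux
    · have h' : b • aff r + c • aff w + a • inf = 0 := by rw [← habc]; abel
      have := key3inf r.1 r.2 w.1 w.2 b c a (hpairne r w hvx) h'
      exact ⟨this.2.2, this.1, this.2.1⟩
    · exact absurd rfl hvx
    · have h' : a • aff q + c • aff w + b • inf = 0 := by rw [← habc]; abel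
      have := key3inf q.1 q.2 w.1 w.2 a c b (hpairne q w hux) h'
      exact ⟨this.1, this.2.2, this.2.1⟩
    · exact key3inf q.1 q.2 r.1 r.2 a b c (hpairne q r huv) habc
    · exact key3aff q.1 q.2 r.1 r.2 w.1 w.2 a b c (hpairne q r huv) (hpairne q w hux)
        (hpairne r w hvx) habc
  · rw [hC, Finset.card_insert_of_notMem, Finset.card_image_of_injective _ haffinj,
      Finset.card_univ, Fintype.card_prod, ZMod.card]
    · ring
    · intro h
      obtain ⟨q, -, hq⟩ := Finset.mem_image.mp h
      exact haffinf q hq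

end Quadric

lemma sWle_eq_of {G : Type*} [AddCommGroup G] (W : Set ℤ) (n₀ : ℕ)
    (h1 : ∀ S : Multiset G, n₀ ≤ Multiset.card S → HasWZeroSubsumLen W S {t | 1 ≤ t ∧ t ≤ 3})
    (S₀ : Multiset G) (hc : Multiset.card S₀ + 1 = n₀)
    (h2 : ¬ HasWZeroSubsumLen W S₀ {t | 1 ≤ t ∧ t ≤ 3}) :
    sWle W G 3 = (n₀ : ℕ∞) := by
  refine le_antisymm (sInf_le ⟨n₀, rfl, h1⟩) (le_sInf ?_)
  rintro N ⟨n, rfl, hn⟩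
  refine Nat.cast_le.mpr ?_
  by_contra hlt
  push_neg at hlt
  exact h2 (hn S₀ (by omega))

/-- for `p` an odd prime, `s_{A,≤3}(C_p) = 2`, `s_{A,≤3}(C_p^2) = 3`,
`s_{A,≤3}(C_p^3) = 2 + p`, and `s_{A,≤3}(C_p^4) = 2 + p²`. -/
theorem stmt16 (p : ℕ) (hp : p.Prime) (hodd : Odd p) :
    sWle (Set.Icc 1 ((p : ℤ) - 1)) (Fin 1 → ZMod p) 3 = ((2 : ℕ) : ℕ∞) ∧
    sWle (Set.Icc 1 ((p : ℤ) - 1)) (Fin 2 → ZMod p) 3 = ((3 : ℕ) : ℕ∞) ∧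
    sWle (Set.Icc 1 ((p : ℤ) - 1)) (Fin 3 → ZMod p) 3 = ((2 + p : ℕ) : ℕ∞) ∧
    sWle (Set.Icc 1 ((p : ℤ) - 1)) (Fin 4 → ZMod p) 3 = ((2 + p ^ 2 : ℕ) : ℕ∞) := by
  haveI : Fact p.Prime := ⟨hp⟩
  refine ⟨?_, ?_, ?_, ?_⟩
  · obtain ⟨C, hcap, hcard⟩ := cap1_ex (p := p)
    refine sWle_eq_of _ 2
      (fun S hS => has_of_capBound 1 (fun C' h => cap1_bound C' h) S hS)
      C.val (by rw [Finset.card_def] at hcard; omega) (not_has_of_cap C hcap)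
  · obtain ⟨C, hcap, hcard⟩ := cap2_ex (p := p)
    refine sWle_eq_of _ 3
      (fun S hS => has_of_capBound 2 (fun C' h => cap2_bound C' h) S hS)
      C.val (by rw [Finset.card_def] at hcard; omega) (not_has_of_cap C hcap)
  · obtain ⟨C, hcap, hcard⟩ := conic_ex (p := p)
    refine sWle_eq_of _ (2 + p)
      (fun S hS => has_of_capBound (p + 1) (fun C' h => cap3_concrete hodd C' h) S (by omega))
      C.val (by rw [Finset.card_def] at hcard; omega) (not_has_of_cap C hcap)
  · obtain ⟨C, hcap, hcard⟩ := quadric_ex (p := p) hodd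
    refine sWle_eq_of _ (2 + p ^ 2)
      (fun S hS => has_of_capBound (p ^ 2 + 1) (fun C' h => cap4_bound hodd C' h) S (by omega))
      C.val (by rw [Finset.card_def] at hcard; omega) (not_has_of_cap C hcap)
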